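/- Let V be a Banach space, I ⊆ ℝ a compact interval [a,b], μ a finite Borel measure on I, and H : I → V a bounded function possessing left limits at every point. For a partition Π of I let H^Π := 1_{{a}}H(a) + Σ_{t∈Π} 1_{(t_-,t]} H(t_-) be the left-endpoint discretization. Then for every p ∈ [1,∞), H^Π → H_- in L^p(I,μ;V) as |Π| → 0, where H_-(t) = lim_{s↗t}H(s) (with H_-(a) = H(a)). -/

import Mathlib

open MeasureTheory
lemma exists_index' {n : ℕ} {u : Fin (n+1) → ℝ} {a b x : ℝ}
    (h0 : u 0 = a) (hl : u (Fin.last n) = b) (hx : x ∈ Set.Ioc a b) :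
    ∃ i : Fin n, u i.castSucc < x ∧ x ≤ u i.succ := by
  by_contra hc
  push_neg at hc
  have key : ∀ k : Fin (n+1), u k < x := by
    intro k
    induction k using Fin.induction with
    | zero => rw [h0]; exact hx.1
    | succ i ih => exact hc i ih
  exact absurd (key (Fin.last n)) (by rw [hl]; exact not_lt.2 hx.2)

lemma sum_indicator_eq' {V : Type*} [NormedAddCommGroup V] (H : ℝ → V)
    {n : ℕ} {u : Fin (n+1) → ℝ} (hu : Monotone u) {x : ℝ}
    (i : Fin n) (hi1 : u i.castSucc < x) (hi2 : x ≤ u i.succ) :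
    ∑ j : Fin n, Set.indicator (Set.Ioc (u j.castSucc) (u j.succ))
      (fun _ => H (u j.castSucc)) x = H (u i.castSucc) := by
  rw [Finset.sum_eq_single i]
  · exact Set.indicator_of_mem (Set.mem_Ioc.mpr ⟨hi1, hi2⟩) _
  · intro j _ hji
    apply Set.indicator_of_notMem
    rcases lt_or_gt_of_ne hji with h | h
    · intro hmem
      have hle : j.succ ≤ i.castSucc := by
        simp only [Fin.le_def, Fin.val_succ, Fin.coe_castSucc]
        exact h
      exact absurd hmem.2 (not_le.2 (lt_of_le_of_lt (hu hle) hi1))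
    · intro hmem
      have hle : i.succ ≤ j.castSucc := by
        simp only [Fin.le_def, Fin.val_succ, Fin.coe_castSucc]
        exact h
      exact absurd hmem.1 (not_lt.2 (le_trans hi2 (hu hle)))
  · intro h; exact absurd (Finset.mem_univ i) h


/-- **`L^p`-convergence of left-endpoint discretizations to the left-limit function**
(Proposition `prop.HPi (iii)`).  Let `V` be a Banach space, `I = [a,b]` a compact interval,
`μ` a finite Borel measure, and `H : I → V` a bounded function possessing left limits at
every point; let `H₋` denote its left-limit function (`H₋(a) = H(a)` and
`H₋(t) = lim_{s↗t} H(s)` for `t ∈ (a,b]`).  For a partition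
`Π = {a = u₀ ≤ ⋯ ≤ u_n = b}` of `I`, let
`H^Π = 1_{{a}} H(a) + ∑_{t∈Π} 1_{(t₋,t]} H(t₋)` be the left-endpoint discretization.  Then
for every `p ∈ [1,∞)`, `H^Π → H₋` in `L^p(I,μ;V)` as the mesh `|Π| → 0`. -/
theorem left_endpoint_discretization_Lp_convergence
    {V : Type*} [NormedAddCommGroup V] [CompleteSpace V]
    (a b : ℝ) (hab : a < b)
    (μ : Measure ℝ) [IsFiniteMeasure μ]
    (H Hm : ℝ → V)
    (hbdd : ∃ C : ℝ, ∀ x ∈ Set.Icc a b, ‖H x‖ ≤ C)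
    (hHma : Hm a = H a)
    (hleft : ∀ t ∈ Set.Ioc a b,
      Filter.Tendsto H (nhdsWithin t (Set.Iio t)) (nhds (Hm t)))
    (p : ℝ) (hp : 1 ≤ p) :
    ∀ ε > (0 : ℝ), ∃ δ > (0 : ℝ), ∀ (n : ℕ) (u : Fin (n + 1) → ℝ),
      Monotone u → u 0 = a → u (Fin.last n) = b →
      (∀ i : Fin n, u i.succ - u i.castSucc < δ) →
      ∫⁻ x in Set.Icc a b,
          ENNReal.ofReal
            (‖(Set.indicator {a} (fun _ => H a) x +
                ∑ i : Fin n,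
                  Set.indicator (Set.Ioc (u i.castSucc) (u i.succ))
                    (fun _ => H (u i.castSucc)) x) - Hm x‖ ^ p) ∂μ
        < ENNReal.ofReal ε := by
  obtain ⟨C₀, hC₀⟩ := hbdd
  set C : ℝ := max C₀ 0 with hCdef
  have hC0 : (0:ℝ) ≤ C := le_max_right _ _
  have hHC : ∀ x ∈ Set.Icc a b, ‖H x‖ ≤ C := fun x hx => (hC₀ x hx).trans (le_max_left _ _)
  have hp0 : (0:ℝ) ≤ p := le_trans zero_le_one hp
  have hpne : p ≠ 0 := by positivity
  have hHmC : ∀ x ∈ Set.Icc a b, ‖Hm x‖ ≤ C := by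
    intro x hx
    rcases eq_or_lt_of_le hx.1 with h | h
    · rw [← h, hHma]; exact hHC a ⟨le_refl a, le_of_lt hab⟩
    · refine le_of_tendsto (hleft x ⟨h, hx.2⟩).norm ?_
      filter_upwards [Ioo_mem_nhdsLT h] with s hs
      exact hHC s ⟨le_of_lt hs.1, hs.2.le.trans hx.2⟩
  intro ε hε
  by_contra hcon
  push_neg at hcon
  choose nn uu hmono h0 hl hmesh hint using fun k : ℕ =>
    hcon (1/(k+1 : ℝ)) (by positivity)
  set F : ℕ → ℝ → V := fun k x =>
    Set.indicator {a} (fun _ => H a) x +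
      ∑ i : Fin (nn k), Set.indicator (Set.Ioc (uu k i.castSucc) (uu k i.succ))
        (fun _ => H (uu k i.castSucc)) x with hF
  -- value of F at a
  have hFa : ∀ k, F k a = H a := by
    intro k
    rw [hF]
    simp only []
    rw [Set.indicator_of_mem (Set.mem_singleton a)]
    have : ∀ i : Fin (nn k), Set.indicator (Set.Ioc (uu k i.castSucc) (uu k i.succ))
        (fun _ => H (uu k i.castSucc)) a = 0 := by
      intro i
      apply Set.indicator_of_notMem
      intro hmem
      have : a ≤ uu k i.castSucc := h0 k ▸ hmono k (Fin.zero_le _)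
      exact absurd hmem.1 (not_lt.2 this)
    rw [Finset.sum_congr rfl (fun i _ => this i), Finset.sum_const, smul_zero, add_zero]
  -- value of F on Ioc
  have hFx : ∀ (k : ℕ), ∀ x ∈ Set.Ioc a b, ∃ t : ℝ,
      (a ≤ t ∧ t < x) ∧ x - 1/(k+1 : ℝ) < t ∧ F k x = H t := by
    intro k x hx
    obtain ⟨i, hi1, hi2⟩ := exists_index' (h0 k) (hl k) hx
    refine ⟨uu k i.castSucc, ⟨h0 k ▸ hmono k (Fin.zero_le _), hi1⟩, ?_, ?_⟩
    · have := hmesh k i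
      linarith [hi2]
    · rw [hF]
      simp only []
      rw [Set.indicator_of_notMem (by simpa using ne_of_gt hx.1),
        sum_indicator_eq' H (hmono k) i hi1 hi2, zero_add]
  -- boundedness of F on Icc
  have hFbdd : ∀ k, ∀ x ∈ Set.Icc a b, ‖F k x‖ ≤ C := by
    intro k x hx
    rcases eq_or_lt_of_le hx.1 with h | h
    · rw [← h, hFa k]; exact hHC a ⟨le_refl a, le_of_lt hab⟩
    · obtain ⟨t, ⟨hta, htx⟩, _, hFt⟩ := hFx k x ⟨h, hx.2⟩
      rw [hFt]
      exact hHC t ⟨hta, (htx.le.trans hx.2)⟩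
  -- pointwise convergence on Icc
  have htend : ∀ x ∈ Set.Icc a b,
      Filter.Tendsto (fun k => F k x) Filter.atTop (nhds (Hm x)) := by
    intro x hx
    rcases eq_or_lt_of_le hx.1 with h | h
    · have : (fun k => F k x) = fun _ => Hm x := by
        funext k; rw [← h, hFa k, hHma]
      rw [this]; exact tendsto_const_nhds
    · have hxI : x ∈ Set.Ioc a b := ⟨h, hx.2⟩
      choose t ht1 ht2 ht3 using fun k => hFx k x hxI
      have htt : Filter.Tendsto t Filter.atTop (nhdsWithin x (Set.Iio x)) := by
        apply tendsto_nhdsWithin_of_tendsto_nhds_of_eventually_within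
        · have hlow : Filter.Tendsto (fun k : ℕ => x - 1/(k+1 : ℝ))
              Filter.atTop (nhds x) := by
            have := tendsto_one_div_add_atTop_nhds_zero_nat (𝕜 := ℝ)
            have h2 := (tendsto_const_nhds (x := x) (f := Filter.atTop (α := ℕ))).sub this
            simpa using h2
          exact tendsto_of_tendsto_of_tendsto_of_le_of_le hlow tendsto_const_nhds
            (fun k => (ht2 k).le) (fun k => (ht1 k).2.le)
        · exact Filter.Eventually.of_forall fun k => (ht1 k).2
      have := (hleft x hxI).comp htt
      exact this.congr fun k => (ht3 k).symm
  -- strong measurability of F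
  have hFsm : ∀ k, StronglyMeasurable (F k) := by
    intro k
    apply StronglyMeasurable.add
    · exact stronglyMeasurable_const.indicator (measurableSet_singleton a)
    · exact Finset.stronglyMeasurable_fun_sum _ fun i _ =>
        stronglyMeasurable_const.indicator measurableSet_Ioc
  -- Hm is AE strongly measurable on the restricted measure
  have hHm_ae : AEStronglyMeasurable Hm (μ.restrict (Set.Icc a b)) := by
    refine aestronglyMeasurable_of_tendsto_ae Filter.atTop
      (fun k => (hFsm k).aestronglyMeasurable) ?_
    filter_upwards [ae_restrict_mem measurableSet_Icc] with x hx using htend x hx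
  set g : ℕ → ℝ → ENNReal := fun k x => ENNReal.ofReal (‖F k x - Hm x‖ ^ p) with hg
  have hgmeas : ∀ k, AEMeasurable (g k) (μ.restrict (Set.Icc a b)) := by
    intro k
    have h1 : AEStronglyMeasurable (fun x => F k x - Hm x)
        (μ.restrict (Set.Icc a b)) := (hFsm k).aestronglyMeasurable.sub hHm_ae
    have h2 := h1.norm
    exact ((ENNReal.continuous_ofReal.comp
      (Real.continuous_rpow_const hp0)).comp_aestronglyMeasurable h2).aemeasurable
  have hDC : Filter.Tendsto (fun k => ∫⁻ x in Set.Icc a b, g k x ∂μ)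
      Filter.atTop (nhds (∫⁻ _ in Set.Icc a b, (0:ENNReal) ∂μ)) := by
    apply tendsto_lintegral_of_dominated_convergence'
      (bound := fun _ => ENNReal.ofReal ((2*C) ^ p)) hgmeas
    · intro k
      filter_upwards [ae_restrict_mem measurableSet_Icc] with x hx
      apply ENNReal.ofReal_le_ofReal
      apply Real.rpow_le_rpow (norm_nonneg _) _ hp0
      calc ‖F k x - Hm x‖ ≤ ‖F k x‖ + ‖Hm x‖ := norm_sub_le _ _
        _ ≤ 2 * C := by linarith [hFbdd k x hx, hHmC x hx]
    · rw [lintegral_const]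
      exact ENNReal.mul_ne_top ENNReal.ofReal_ne_top (measure_ne_top _ _)
    · filter_upwards [ae_restrict_mem measurableSet_Icc] with x hx
      have h1 : Filter.Tendsto (fun k => ‖F k x - Hm x‖) Filter.atTop (nhds 0) := by
        have := ((htend x hx).sub (tendsto_const_nhds (x := Hm x))).norm
        simpa using this
      have h2 := ((Real.continuous_rpow_const hp0).tendsto 0).comp h1
      rw [Real.zero_rpow hpne] at h2
      have h3 := (ENNReal.continuous_ofReal.tendsto 0).comp h2
      rw [ENNReal.ofReal_zero] at h3
      exact h3
  rw [lintegral_zero] at hDC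
  have hge : ENNReal.ofReal ε ≤ 0 := by
    refine ge_of_tendsto hDC (Filter.Eventually.of_forall fun k => ?_)
    exact hint k
  exact absurd hge (not_le.2 (ENNReal.ofReal_pos.2 hε))
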